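/- Let S be a sub-critical SCC of the dependence graph of A and let m be a nonnegative fixed point of A. If there exist a vertex i ∈ S and a vertex j ∉ S with A i j > 0 and m j > 0, then m i' > 0 for every vertex i' ∈ S. -/
import Mathlib


open Matrix Filter Topology Polynomial

attribute [local instance] Classical.propDecidable

/-- There is a directed edge from `a` to `b` in the dependence graph `G(A)`:
an edge from `j` to `i` whenever `i ≠ j` and `A i j ≠ 0`. -/
def Edge {n : ℕ} (A : Matrix (Fin n) (Fin n) ℝ) (a b : Fin n) : Prop :=
  a ≠ b ∧ A b a ≠ 0

/-- `i` reaches `j`: reflexive–transitive closure of the edge relation. -/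
def Reaches {n : ℕ} (A : Matrix (Fin n) (Fin n) ℝ) : Fin n → Fin n → Prop :=
  Relation.ReflTransGen (Edge A)

/-- Mutual reachability. -/
def Mutual {n : ℕ} (A : Matrix (Fin n) (Fin n) ℝ) (i j : Fin n) : Prop :=
  Reaches A i j ∧ Reaches A j i

/-- `S` is a strongly connected component of `G(A)`:
an equivalence class of the mutual-reachability relation. -/
def IsSCC {n : ℕ} (A : Matrix (Fin n) (Fin n) ℝ) (S : Set (Fin n)) : Prop :=
  ∃ i : Fin n, S = {j | Mutual A i j}

/-- The block `A_S`: the principal submatrix of `A` on rows and columns indexed by `S`. -/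
def block {n : ℕ} (A : Matrix (Fin n) (Fin n) ℝ) (S : Set (Fin n)) : Matrix S S ℝ :=
  A.submatrix Subtype.val Subtype.val

/-- The eigenvalues of a real square matrix: complex roots of its characteristic polynomial. -/
def IsEigenvalue {m : Type*} [Fintype m] [DecidableEq m]
    (M : Matrix m m ℝ) (z : ℂ) : Prop :=
  ((M.charpoly).map (algebraMap ℝ ℂ)).IsRoot z

/-- `A` is a Metzler matrix. -/
def Metzler {n : ℕ} (A : Matrix (Fin n) (Fin n) ℝ) : Prop :=
  ∀ i j, i ≠ j → 0 ≤ A i j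

/-- `S` is sub-critical: every eigenvalue of `A_S` has negative real part. -/
def SubCritical {n : ℕ} (A : Matrix (Fin n) (Fin n) ℝ) (S : Set (Fin n)) : Prop :=
  ∀ z : ℂ, IsEigenvalue (block A S) z → z.re < 0

/-- `S` is critical: `0` is an eigenvalue of `A_S` and all eigenvalues of `A_S` have
nonpositive real part. -/
def Critical {n : ℕ} (A : Matrix (Fin n) (Fin n) ℝ) (S : Set (Fin n)) : Prop :=
  IsEigenvalue (block A S) 0 ∧ ∀ z : ℂ, IsEigenvalue (block A S) z → z.re ≤ 0

/-- `S` is super-critical: `A_S` has an eigenvalue with positive real part. -/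
def SuperCritical {n : ℕ} (A : Matrix (Fin n) (Fin n) ℝ) (S : Set (Fin n)) : Prop :=
  ∃ z : ℂ, IsEigenvalue (block A S) z ∧ 0 < z.re

/-- `m` is a nonnegative fixed point of `A`. -/
def NonnegFixedPoint {n : ℕ} (A : Matrix (Fin n) (Fin n) ℝ) (m : Fin n → ℝ) : Prop :=
  (∀ i, 0 ≤ m i) ∧ A *ᵥ m = 0

/-- `S` is trivial: every nonnegative fixed point vanishes on every vertex of `S`. -/
def TrivialSCC {n : ℕ} (A : Matrix (Fin n) (Fin n) ℝ) (S : Set (Fin n)) : Prop :=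
  ∀ m : Fin n → ℝ, NonnegFixedPoint A m → ∀ i ∈ S, m i = 0

/-- `S` is upstream of `T` (and `T` downstream of `S`). -/
def Upstream {n : ℕ} (A : Matrix (Fin n) (Fin n) ℝ) (S T : Set (Fin n)) : Prop :=
  ∃ i ∈ S, ∃ j ∈ T, Reaches A i j

/-- `S` is immediately upstream of `T`. -/
def ImmediatelyUpstream {n : ℕ} (A : Matrix (Fin n) (Fin n) ℝ) (S T : Set (Fin n)) : Prop :=
  S ≠ T ∧ ∃ i ∈ S, ∃ j ∈ T, Edge A i j

/-- The matrix exponential `exp M = ∑ M^k / k!`. -/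
noncomputable def mexp {n : ℕ} (M : Matrix (Fin n) (Fin n) ℝ) : Matrix (Fin n) (Fin n) ℝ :=
  ∑' k : ℕ, ((k.factorial : ℝ)⁻¹) • M ^ k

/-- If `m k = 0`, every incoming off-diagonal term vanishes. -/
lemma zero_back {n : ℕ} {A : Matrix (Fin n) (Fin n) ℝ} (hA : Metzler A)
    {m : Fin n → ℝ} (hm : NonnegFixedPoint A m)
    {k : Fin n} (hk : m k = 0) {l : Fin n} (hl : l ≠ k) : A k l * m l = 0 := by
  have hsum : ∑ x, A k x * m x = 0 := by
    have h0 : (A *ᵥ m) k = (0 : Fin n → ℝ) k := by rw [hm.2]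
    simpa [Matrix.mulVec, dotProduct] using h0
  have hnn : ∀ x ∈ Finset.univ, 0 ≤ A k x * m x := by
    intro x _
    by_cases hx : x = k
    · subst hx; rw [hk, mul_zero]
    · exact mul_nonneg (hA k x (Ne.symm hx)) (hm.1 x)
  exact (Finset.sum_eq_zero_iff_of_nonneg hnn).mp hsum l (Finset.mem_univ l)

/-- Zeros of a nonnegative fixed point propagate backwards along reachability. -/
lemma zero_reach {n : ℕ} {A : Matrix (Fin n) (Fin n) ℝ} (hA : Metzler A)
    {m : Fin n → ℝ} (hm : NonnegFixedPoint A m)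
    {a b : Fin n} (h : Reaches A a b) (hb : m b = 0) : m a = 0 := by
  induction h using Relation.ReflTransGen.head_induction_on with
  | refl => exact hb
  | head hedge _ ih =>
    have h0 := zero_back hA hm ih hedge.1
    rcases mul_eq_zero.mp h0 with h | h
    · exact absurd h hedge.2
    · exact h

/-- a sub-critical SCC receiving positive mass from outside carries strictly
positive mass on all of its vertices. -/
theorem pos_on_subCritical_scc (n : ℕ) (hn : 1 ≤ n)
    (A : Matrix (Fin n) (Fin n) ℝ) (hA : Metzler A)
    (S : Set (Fin n)) (hS : IsSCC A S) (hsub : SubCritical A S)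
    (m : Fin n → ℝ) (hm : NonnegFixedPoint A m)
    (i : Fin n) (hi : i ∈ S) (j : Fin n) (hj : j ∉ S)
    (hAij : 0 < A i j) (hmj : 0 < m j)
    (i' : Fin n) (hi' : i' ∈ S) : 0 < m i' := by
  rcases hS with ⟨i₀, rfl⟩
  rcases lt_or_eq_of_le (hm.1 i') with h | h
  · exact h
  exfalso
  -- i reaches i' within the SCC
  have hreach : Reaches A i i' := hi.2.trans hi'.1
  have hmi : m i = 0 := zero_reach hA hm hreach h.symm
  have hji : j ≠ i := fun hji => hj (hji ▸ hi)
  have := zero_back hA hm hmi hji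
  rcases mul_eq_zero.mp this with h' | h'
  · exact hAij.ne' h'
  · exact hmj.ne' h'
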